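/- Let N be a positive integer, θ ∈ ℝᴺ, λ > 0, and let Ψ : ℝ → Matrix(p×N, ℝ) and z : ℝ → ℝᵖ be continuous with z(t) = Ψ(t)·θ for all t ≥ 0. Let Y : ℝ → ℝᴺ and Ω : ℝ → Matrix(N×N, ℝ) be differentiable and satisfy Y'(t) = −λ·Y(t) + λ·Ψ(t)ᵀ·z(t), Ω'(t) = −λ·Ω(t) + λ·Ψ(t)ᵀ·Ψ(t) for all t ≥ 0, with initial conditions Y(0) = 0 and Ω(0) = 0. Then Y(t) = Ω(t)·θ for all t ≥ 0, and consequently adj(Ω(t))·Y(t) = det(Ω(t))·θ for all t ≥ 0, where adj denotes the adjugate matrix. -/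

import Mathlib

attribute [local instance] Matrix.normedAddCommGroup Matrix.normedSpace

/-- DREM step: filtering the regression `z = Ψ θ` through `Ẏ = −λY + λΨᵀz`,
`Ω̇ = −λΩ + λΨᵀΨ` from zero initial conditions yields `Y = Ω θ`, and hence
`adj(Ω) Y = det(Ω) θ`. -/
theorem drem_extension_and_mixing
    (N p : ℕ) (hN : 0 < N) (hp : 0 < p)
    (θ : Fin N → ℝ) (lam : ℝ) (hlam : 0 < lam)
    (Ψ : ℝ → Matrix (Fin p) (Fin N) ℝ) (z : ℝ → Fin p → ℝ)
    (hΨ : Continuous Ψ) (hz : Continuous z)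
    (hreg : ∀ t ≥ (0 : ℝ), z t = (Ψ t).mulVec θ)
    (Y : ℝ → Fin N → ℝ) (Ω : ℝ → Matrix (Fin N) (Fin N) ℝ)
    (hY : ∀ t ≥ (0 : ℝ), HasDerivAt Y (-lam • Y t + lam • (Ψ t).transpose.mulVec (z t)) t)
    (hΩ : ∀ t ≥ (0 : ℝ), HasDerivAt Ω (-lam • Ω t + lam • ((Ψ t).transpose * Ψ t)) t)
    (hY0 : Y 0 = 0) (hΩ0 : Ω 0 = 0) :
    ∀ t ≥ (0 : ℝ),
      Y t = (Ω t).mulVec θ ∧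
      (Ω t).adjugate.mulVec (Y t) = (Ω t).det • θ := by
  -- the linear map M ↦ M.mulVec θ, as a continuous linear map
  set L : Matrix (Fin N) (Fin N) ℝ →L[ℝ] (Fin N → ℝ) :=
    LinearMap.toContinuousLinearMap
      { toFun := fun M => M.mulVec θ
        map_add' := fun A B => Matrix.add_mulVec A B θ
        map_smul' := fun c A => Matrix.smul_mulVec c A θ } with hL
  have hLapp : ∀ M : Matrix (Fin N) (Fin N) ℝ, L M = M.mulVec θ := fun M => rfl
  -- the error E = Y - Ω θ
  set E : ℝ → Fin N → ℝ := fun t => Y t - (Ω t).mulVec θ with hE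
  have hE' : ∀ t ≥ (0 : ℝ), HasDerivAt E (-lam • E t) t := by
    intro t ht
    have hΩθ : HasDerivAt (fun s => (Ω s).mulVec θ)
        ((-lam • Ω t + lam • ((Ψ t).transpose * Ψ t)).mulVec θ) t := by
      have := (L.hasFDerivAt.comp t (hΩ t ht).hasFDerivAt).hasDerivAt
      refine this.congr_deriv ?_
      show L ((1:ℝ) • _) = _
      rw [one_smul, hLapp]
    have h := (hY t ht).sub hΩθ
    have : -lam • Y t + lam • (Ψ t).transpose.mulVec (z t) -
        (-lam • Ω t + lam • ((Ψ t).transpose * Ψ t)).mulVec θ = -lam • E t := by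
      rw [hreg t ht]
      simp only [hE, Matrix.add_mulVec, Matrix.smul_mulVec, Matrix.mulVec_mulVec,
        smul_sub, neg_smul, Matrix.neg_mulVec]
      abel
    rwa [this] at h
  -- g t = exp(lam t) • E t has zero derivative on [0,∞)
  set g : ℝ → Fin N → ℝ := fun t => Real.exp (lam * t) • E t with hg
  have hg' : ∀ t ≥ (0 : ℝ), HasDerivAt g 0 t := by
    intro t ht
    have hexp : HasDerivAt (fun s => Real.exp (lam * s)) (lam * Real.exp (lam * t)) t := by
      have h' : HasDerivAt (Real.exp ∘ HMul.hMul lam) (lam * Real.exp (lam * t)) t := by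
        simpa [mul_comm] using (Real.hasDerivAt_exp (lam * t)).comp t
          ((hasDerivAt_id t).const_mul lam)
      exact h'
    have := hexp.smul (hE' t ht)
    have h' : HasDerivAt ((fun s => Real.exp (lam * s)) • E) 0 t := by
      simpa [smul_smul, mul_comm, add_comm, smul_add] using this
    exact h'
  -- hence g is constant on [0,∞), equal to g 0 = 0
  have hEzero : ∀ t ≥ (0 : ℝ), E t = 0 := by
    intro t ht
    have hconst : g t = g 0 := by
      have hcont : ContinuousOn g (Set.Icc 0 t) := fun x hx =>
        ((hg' x hx.1).continuousAt).continuousWithinAt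
      have hderiv : ∀ x ∈ Set.Ico (0:ℝ) t, HasDerivWithinAt g 0 (Set.Ici x) x :=
        fun x hx => (hg' x hx.1).hasDerivWithinAt
      exact constant_of_has_deriv_right_zero hcont hderiv t ⟨ht, le_refl t⟩
    have hg0 : g 0 = 0 := by simp [hg, hE, hY0, hΩ0]
    have : Real.exp (lam * t) • E t = 0 := by rw [← hg0]; exact hconst
    have hexp_ne : Real.exp (lam * t) ≠ 0 := Real.exp_ne_zero _
    exact (smul_eq_zero.mp this).resolve_left hexp_ne
  intro t ht
  have h1 : Y t = (Ω t).mulVec θ := by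
    have := hEzero t ht
    rw [hE] at this
    exact sub_eq_zero.mp this
  refine ⟨h1, ?_⟩
  rw [h1, Matrix.mulVec_mulVec, Matrix.adjugate_mul, Matrix.smul_mulVec,
    Matrix.one_mulVec]
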